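/- arXiv:alg-geom/9711012 — 3 statements merged into one kernel-verified Lean document; each statement's English description precedes it below -/
import Mathlib

section
/- For an abelian surface A with an ample line bundle L of type (1,n) on which there are no elliptic curves, the intermediate lattice count in the genus-2 curve enumeration reduces to the following: the number of sublattices Λ of Γ = ℤ⁴ of index n satisfying a(Λ,Λ) ⊆ nℤ, where a is the alternating form with a(x₁,y₁)=1, a(x₂,y₂)=n, a(x₁,x₂)=a(y₁,y₂)=a(x₁,y₂)=a(x₂,y₁)=0 in a symplectic basis x₁,x₂,y₁,y₂, equals σ₁(n). Concretely: the sublattices Λ ⊆ ℤ² × ℤ² of index n with a(Λ,Λ) ⊆ nℤ are exactly those of the form Λ' × ℤ², where Λ' ⊆ ℤ² has index n, and their number is σ₁(n). -/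
/-- The alternating form `a` on `Γ = ℤ² × ℤ²` (with symplectic basis `x₁, y₁, x₂, y₂`,
`a(x₁,y₁) = 1`, `a(x₂,y₂) = n`, all other pairings zero). -/
def symplecticFormA (n : ℕ) (v w : (ℤ × ℤ) × (ℤ × ℤ)) : ℤ :=
  (v.1.1 * w.1.2 - w.1.1 * v.1.2) + (n : ℤ) * (v.2.1 * w.2.2 - w.2.1 * v.2.2)

namespace CountIsoAux

/-- The sublattice of `ℤ²` with Hermite-normal-form basis `(a, 0)`, `(b, d)`. -/
def latL (a d : ℕ) (b : ℤ) : AddSubgroup (ℤ × ℤ) where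
  carrier := {u | ∃ j k : ℤ, u.1 = j * a + k * b ∧ u.2 = k * d}
  zero_mem' := ⟨0, 0, by simp, by simp⟩
  add_mem' := by
    rintro ⟨x, y⟩ ⟨x', y'⟩ ⟨j, k, h1, h2⟩ ⟨j', k', h1', h2'⟩
    exact ⟨j + j', k + k', by simp only [Prod.fst_add] at *; rw [h1, h1']; ring,
      by simp only [Prod.snd_add] at *; rw [h2, h2']; ring⟩
  neg_mem' := by
    rintro ⟨x, y⟩ ⟨j, k, h1, h2⟩
    exact ⟨-j, -k, by simp only [Prod.fst_neg] at *; rw [h1]; ring,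
      by simp only [Prod.snd_neg] at *; rw [h2]; ring⟩

lemma mem_latL {a d : ℕ} {b : ℤ} {u : ℤ × ℤ} :
    u ∈ latL a d b ↔ ∃ j k : ℤ, u.1 = j * a + k * b ∧ u.2 = k * d := Iff.rfl

lemma latL_index (a d : ℕ) (b : ℤ) (ha : 0 < a) (hd : 0 < d) :
    (latL a d b).index = a * d := by
  have hdz : (d : ℤ) ≠ 0 := by exact_mod_cast hd.ne'
  set φ : ℤ × ℤ →+ ZMod d := (Int.castAddHom (ZMod d)).comp (AddMonoidHom.snd ℤ ℤ) with hφ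
  have hφapp : ∀ u : ℤ × ℤ, φ u = ((u.2 : ℤ) : ZMod d) := fun u => rfl
  have hφsurj : Function.Surjective φ := fun t => by
    obtain ⟨y, hy⟩ := ZMod.intCast_surjective t
    exact ⟨(0, y), hy⟩
  have hMindex : φ.ker.index = d := by
    rw [AddSubgroup.index_ker, AddMonoidHom.range_eq_top.mpr hφsurj]
    rw [Nat.card_congr AddSubgroup.topEquiv.toEquiv, Nat.card_zmod]
  have hmemker : ∀ u : ℤ × ℤ, u ∈ φ.ker ↔ (d : ℤ) ∣ u.2 := by
    intro u
    rw [AddMonoidHom.mem_ker, hφapp, ZMod.intCast_zmod_eq_zero_iff_dvd]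
  have hle : latL a d b ≤ φ.ker := by
    rintro ⟨x, y⟩ ⟨j, k, h1, h2⟩
    rw [hmemker]
    exact ⟨k, by simpa [mul_comm] using h2⟩
  -- the map from the kernel to `ZMod a`
  have hdivadd : ∀ u v : ↥φ.ker,
      ((u : ℤ × ℤ).2 + (v : ℤ × ℤ).2) / (d : ℤ) = (u : ℤ × ℤ).2 / d + (v : ℤ × ℤ).2 / d := by
    rintro ⟨u, hu⟩ ⟨v, hv⟩
    obtain ⟨k, hk⟩ := (hmemker u).mp hu
    obtain ⟨k', hk'⟩ := (hmemker v).mp hv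
    simp only [hk, hk']
    rw [← mul_add, Int.mul_ediv_cancel_left _ hdz, Int.mul_ediv_cancel_left _ hdz,
      Int.mul_ediv_cancel_left _ hdz]
  set ψ : ↥φ.ker →+ ZMod a :=
    { toFun := fun u => (((u : ℤ × ℤ).1 - b * ((u : ℤ × ℤ).2 / d) : ℤ) : ZMod a)
      map_zero' := by simp
      map_add' := by
        intro u v
        push_cast [AddSubgroup.coe_add, Prod.fst_add, Prod.snd_add, hdivadd u v]
        ring } with hψ
  have hψsurj : Function.Surjective ψ := by
    intro t
    obtain ⟨x, hx⟩ := ZMod.intCast_surjective t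
    refine ⟨⟨(x, 0), (hmemker _).mpr ⟨0, by simp⟩⟩, ?_⟩
    simp [hψ, hx]
  have hψker : (latL a d b).addSubgroupOf φ.ker = ψ.ker := by
    ext ⟨u, hu⟩
    obtain ⟨k, hk⟩ := (hmemker u).mp hu
    have hk2 : u.2 / (d : ℤ) = k := by rw [hk, Int.mul_ediv_cancel_left _ hdz]
    -- `hk : u.2 = ↑d * k`
    simp only [AddSubgroup.mem_addSubgroupOf, AddMonoidHom.mem_ker, hψ, AddMonoidHom.coe_mk,
      ZeroHom.coe_mk, mem_latL, hk2, ZMod.intCast_zmod_eq_zero_iff_dvd]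
    constructor
    · rintro ⟨j, k', h1, h2⟩
      have hkk : k' = k := by
        have h3 : (d : ℤ) * k' = d * k := by rw [← hk, h2]; ring
        exact mul_left_cancel₀ hdz h3
      exact ⟨j, by rw [h1, hkk]; ring⟩
    · rintro ⟨j, hj⟩
      exact ⟨j, k, by linarith [hj], by rw [hk]; ring⟩
  have hrel : (latL a d b).relIndex φ.ker = a := by
    rw [AddSubgroup.relIndex, hψker, AddSubgroup.index_ker,
      AddMonoidHom.range_eq_top.mpr hψsurj, Nat.card_congr AddSubgroup.topEquiv.toEquiv,
      Nat.card_zmod]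
  have := AddSubgroup.relIndex_mul_index hle
  rw [hrel, hMindex] at this
  exact this.symm


lemma zsmul_mem' {H : AddSubgroup (ℤ × ℤ)} {v : ℤ × ℤ} (hv : v ∈ H) (k : ℤ) : k • v ∈ H :=
  zsmul_mem hv k

/-- Classification of finite-index subgroups of `ℤ × ℤ`. -/
lemma classify {H : AddSubgroup (ℤ × ℤ)} (hH : H.index ≠ 0) :
    ∃ a d : ℕ, ∃ b : ℤ, 0 < a ∧ 0 < d ∧ 0 ≤ b ∧ b < a ∧ H = latL a d b := by
  have hn : 0 < H.index := Nat.pos_of_ne_zero hH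
  -- the subgroup {x | (x, 0) ∈ H} of ℤ
  obtain ⟨a₀, ha₀⟩ := Int.subgroup_cyclic (H.comap (AddMonoidHom.inl ℤ ℤ))
  obtain ⟨d₀, hd₀⟩ := Int.subgroup_cyclic (H.map (AddMonoidHom.snd ℤ ℤ))
  have hK1 : ∀ x : ℤ, (x, (0:ℤ)) ∈ H ↔ a₀ ∣ x := by
    intro x
    rw [show ((x, (0:ℤ)) ∈ H) ↔ x ∈ H.comap (AddMonoidHom.inl ℤ ℤ) from Iff.rfl, ha₀,
      AddSubgroup.mem_closure_singleton]
    constructor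
    · rintro ⟨n, hn⟩; exact ⟨n, by rw [← hn]; simp [mul_comm]⟩
    · rintro ⟨n, hn⟩; exact ⟨n, by rw [hn]; simp [mul_comm]⟩
  have hP2 : ∀ y : ℤ, (∃ x : ℤ, (x, y) ∈ H) ↔ d₀ ∣ y := by
    intro y
    constructor
    · intro ⟨x, hx⟩
      have : y ∈ H.map (AddMonoidHom.snd ℤ ℤ) := ⟨(x, y), hx, rfl⟩
      rw [hd₀, AddSubgroup.mem_closure_singleton] at this
      obtain ⟨n, hn⟩ := this
      exact ⟨n, by rw [← hn]; simp [mul_comm]⟩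
    · rintro ⟨n, rfl⟩
      have : (d₀ * n) ∈ H.map (AddMonoidHom.snd ℤ ℤ) := by
        rw [hd₀, AddSubgroup.mem_closure_singleton]
        exact ⟨n, by simp [mul_comm]⟩
      obtain ⟨v, hv, hv2⟩ := this
      exact ⟨v.1, by rwa [show v = (v.1, d₀ * n) from Prod.ext rfl hv2] at hv⟩
  -- nontriviality from finite index
  have hIdx1 : ((H.index : ℤ), (0:ℤ)) ∈ H := by
    have := H.nsmul_index_mem ((1:ℤ), (0:ℤ))
    simpa using this
  have hIdx2 : ∃ x : ℤ, (x, (H.index : ℤ)) ∈ H := by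
    have := H.nsmul_index_mem ((0:ℤ), (1:ℤ))
    exact ⟨0, by simpa using this⟩
  have ha₀ne : a₀ ≠ 0 := by
    rintro rfl
    obtain ⟨c, hc⟩ := (hK1 _).mp hIdx1
    simp at hc
    omega
  have hd₀ne : d₀ ≠ 0 := by
    rintro rfl
    obtain ⟨c, hc⟩ := (hP2 _).mp hIdx2
    simp at hc
    omega
  set a : ℕ := a₀.natAbs with haa
  set d : ℕ := d₀.natAbs with hdd
  have ha : 0 < a := Int.natAbs_pos.mpr ha₀ne
  have hd : 0 < d := Int.natAbs_pos.mpr hd₀ne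
  have haH : (((a:ℤ)), (0:ℤ)) ∈ H := (hK1 _).mpr (Int.natAbs_dvd.mp dvd_rfl)
  obtain ⟨b₀, hb₀⟩ : ∃ x : ℤ, (x, (d:ℤ)) ∈ H := (hP2 _).mpr (Int.natAbs_dvd.mp dvd_rfl)
  have haz : (a : ℤ) ≠ 0 := by exact_mod_cast ha.ne'
  set b : ℤ := b₀ % a with hbb
  have hbH : (b, (d:ℤ)) ∈ H := by
    have h1 : ((b₀ / a * a : ℤ), (0:ℤ)) ∈ H := by
      have := zsmul_mem' haH (b₀ / a)
      simpa [smul_eq_mul, mul_comm] using this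
    have := AddSubgroup.sub_mem H hb₀ h1
    simpa [hbb, Int.emod_def, mul_comm] using this
  refine ⟨a, d, b, ha, hd, Int.emod_nonneg _ haz, ?_, ?_⟩
  · rw [hbb]; exact_mod_cast Int.emod_lt_of_pos b₀ (by exact_mod_cast ha)
  · ext u
    rw [mem_latL]
    constructor
    · intro hu
      have h2 : (d₀ : ℤ) ∣ u.2 := (hP2 u.2).mp ⟨u.1, by rwa [show (u.1, u.2) = u from rfl]⟩
      have h2' : (d : ℤ) ∣ u.2 := (Int.natAbs_dvd).mpr h2
      obtain ⟨k, hk⟩ := h2'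
      have h3 : (u.1 - k * b, (0:ℤ)) ∈ H := by
        have hkb : k • (b, (d:ℤ)) ∈ H := zsmul_mem' hbH k
        have hsub := AddSubgroup.sub_mem H hu hkb
        have heq : u - k • (b, (d:ℤ)) = (u.1 - k * b, 0) := by
          rw [Prod.ext_iff]
          refine ⟨by simp [smul_eq_mul], ?_⟩
          simp only [Prod.snd_sub, Prod.smul_mk, smul_eq_mul, hk]
          ring
        rwa [heq] at hsub
      have h4 : (a : ℤ) ∣ u.1 - k * b := Int.natAbs_dvd.mpr ((hK1 _).mp h3)
      obtain ⟨j, hj⟩ := h4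
      exact ⟨j, k, by rw [mul_comm] at hj; linarith, by rw [hk]; ring⟩
    · rintro ⟨j, k, h1, h2⟩
      have hmem := AddSubgroup.add_mem H (zsmul_mem' haH j) (zsmul_mem' hbH k)
      have heq : j • ((a:ℤ), (0:ℤ)) + k • (b, (d:ℤ)) = u := by
        rw [Prod.ext_iff]
        constructor
        · simp only [Prod.fst_add, Prod.smul_mk, smul_eq_mul, h1]
          try ring
        · simp only [Prod.snd_add, Prod.smul_mk, smul_eq_mul, h2]
          try ring
      rwa [heq] at hmem

/-- Uniqueness of the Hermite normal form. -/
lemma latL_inj {a d a' d' : ℕ} {b b' : ℤ} (ha : 0 < a) (hd : 0 < d) (ha' : 0 < a')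
    (hd' : 0 < d') (hb : 0 ≤ b) (hba : b < a) (hb' : 0 ≤ b') (hba' : b' < a')
    (h : latL a d b = latL a' d' b') : a = a' ∧ d = d' ∧ b = b' := by
  have mem : ∀ u : ℤ × ℤ, u ∈ latL a d b ↔ u ∈ latL a' d' b' := fun u => by rw [h]
  have hdz' : (d' : ℤ) ≠ 0 := by exact_mod_cast hd'.ne'
  have hdz : (d : ℤ) ≠ 0 := by exact_mod_cast hd.ne'
  -- a = a'
  have hA : ∀ (α δ : ℕ) (β : ℤ) (α' δ' : ℕ) (β' : ℤ), 0 < δ' →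
      (∀ u : ℤ × ℤ, u ∈ latL α δ β → u ∈ latL α' δ' β') → (α' : ℤ) ∣ (α : ℤ) := by
    intro α δ β α' δ' β' hδ' hsub
    obtain ⟨j, k, h1, h2⟩ := hsub ((α : ℤ), 0) ⟨1, 0, by simp, by simp⟩
    have hk : k = 0 := by
      rcases mul_eq_zero.mp h2.symm with h | h
      · exact h
      · exact absurd h (by exact_mod_cast hδ'.ne')
    exact ⟨j, by rw [hk] at h1; simpa [mul_comm] using h1⟩
  have haa' : a = a' := by
    have h1 := hA a d b a' d' b' hd' (fun u hu => (mem u).mp hu)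
    have h2 := hA a' d' b' a d b hd (fun u hu => (mem u).mpr hu)
    exact Nat.dvd_antisymm (by exact_mod_cast h2) (by exact_mod_cast h1)
  have hD : ∀ (α δ : ℕ) (β : ℤ) (α' δ' : ℕ) (β' : ℤ),
      (∀ u : ℤ × ℤ, u ∈ latL α δ β → u ∈ latL α' δ' β') → (δ' : ℤ) ∣ (δ : ℤ) := by
    intro α δ β α' δ' β' hsub
    obtain ⟨j, k, h1, h2⟩ := hsub (β, (δ : ℤ)) ⟨0, 1, by simp, by simp⟩
    exact ⟨k, by simpa [mul_comm] using h2⟩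
  have hdd' : d = d' := by
    have h1 := hD a d b a' d' b' (fun u hu => (mem u).mp hu)
    have h2 := hD a' d' b' a d b (fun u hu => (mem u).mpr hu)
    exact Nat.dvd_antisymm (by exact_mod_cast h2) (by exact_mod_cast h1)
  refine ⟨haa', hdd', ?_⟩
  obtain ⟨j, k, h1, h2⟩ := (mem (b, (d:ℤ))).mp ⟨0, 1, by simp, by simp⟩
  have hk1 : k = 1 := by
    rw [← hdd'] at h2
    have : k * (d : ℤ) = 1 * d := by rw [← h2]; ring
    exact mul_right_cancel₀ hdz this
  rw [hk1, one_mul, ← haa'] at h1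
  have h1' : b = j * (a:ℤ) + b' := h1
  have hba'' : b' < (a : ℤ) := by rw [haa']; exact hba'
  have hapos : (0:ℤ) < (a:ℤ) := by exact_mod_cast ha
  have hj0 : j = 0 := by
    by_contra hj
    rcases lt_or_gt_of_ne hj with hj | hj
    · have hle : j * (a:ℤ) ≤ -1 * a := mul_le_mul_of_nonneg_right (by omega) (by positivity)
      omega
    · have hle : 1 * (a:ℤ) ≤ j * a := mul_le_mul_of_nonneg_right (by omega) (by positivity)
      omega
  rw [hj0, zero_mul, zero_add] at h1'
  exact h1'


lemma card_index_n (n : ℕ) (hn : 0 < n) :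
    Nat.card {H : AddSubgroup (ℤ × ℤ) // H.index = n} = ∑ d ∈ n.divisors, d := by
  classical
  have hnz : n ≠ 0 := hn.ne'
  -- bijection with pairs (a, b) with a ∣ n, 0 ≤ b < a
  set S := Σ a : {a : ℕ // a ∈ n.divisors}, Fin a.1 with hS
  have hdivpos : ∀ a : ℕ, a ∈ n.divisors → 0 < a := fun a haa =>
    Nat.pos_of_mem_divisors haa
  have hdivdvd : ∀ a : ℕ, a ∈ n.divisors → a ∣ n := fun a haa =>
    (Nat.mem_divisors.mp haa).1
  set f : S → {H : AddSubgroup (ℤ × ℤ) // H.index = n} := fun p =>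
    ⟨latL p.1.1 (n / p.1.1) (p.2 : ℤ), by
      rw [latL_index _ _ _ (hdivpos _ p.1.2)
        (Nat.div_pos (Nat.le_of_dvd hn (hdivdvd _ p.1.2)) (hdivpos _ p.1.2))]
      exact Nat.mul_div_cancel' (hdivdvd _ p.1.2)⟩ with hf
  have hbij : Function.Bijective f := by
    constructor
    · rintro ⟨⟨a, haa⟩, b⟩ ⟨⟨a', haa'⟩, b'⟩ hpq
      simp only [hf, Subtype.mk_eq_mk] at hpq
      have hposa := hdivpos _ haa
      have hposa' := hdivpos _ haa'
      obtain ⟨h1, h2, h3⟩ := latL_inj hposa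
        (Nat.div_pos (Nat.le_of_dvd hn (hdivdvd _ haa)) hposa)
        hposa' (Nat.div_pos (Nat.le_of_dvd hn (hdivdvd _ haa')) hposa')
        (by positivity) (by exact_mod_cast b.2) (by positivity) (by exact_mod_cast b'.2) hpq
      subst h1
      have hbb : b = b' := Fin.ext (by exact_mod_cast h3)
      subst hbb
      rfl
    · rintro ⟨H, hH⟩
      obtain ⟨a, d, b, hapos, hdpos, hb0, hba, rfl⟩ := classify (by rw [hH]; exact hnz)
      rw [latL_index _ _ _ hapos hdpos] at hH
      have hadvd : a ∣ n := ⟨d, hH.symm⟩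
      have hd : d = n / a := by rw [← hH, Nat.mul_div_cancel_left _ hapos]
      have hblt : b.toNat < a := by omega
      refine ⟨⟨⟨a, Nat.mem_divisors.mpr ⟨hadvd, hnz⟩⟩, ⟨b.toNat, hblt⟩⟩, ?_⟩
      simp only [hf, Subtype.mk_eq_mk]
      congr 1
      · exact hd.symm
      · omega
  have hcard : Nat.card {H : AddSubgroup (ℤ × ℤ) // H.index = n} = Nat.card S :=
    (Nat.card_congr (Equiv.ofBijective f hbij)).symm
  rw [hcard, Nat.card_eq_fintype_card, Fintype.card_sigma]
  simp only [Fintype.card_fin]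
  exact Finset.sum_coe_sort n.divisors (fun d => d)


lemma prod_top_eq_comap (Λ' : AddSubgroup (ℤ × ℤ)) :
    Λ'.prod (⊤ : AddSubgroup (ℤ × ℤ)) = Λ'.comap (AddMonoidHom.fst (ℤ × ℤ) (ℤ × ℤ)) := by
  ext v
  simp [AddSubgroup.mem_prod, AddSubgroup.mem_comap]

end CountIsoAux

set_option maxHeartbeats 1000000 in
open CountIsoAux in
/-- The sublattices `Λ ⊆ ℤ² × ℤ²` of index `n` with `a(Λ,Λ) ⊆ nℤ` are exactly those of
the form `Λ' × ℤ²` with `Λ' ⊆ ℤ²` of index `n`, and their number is `σ₁(n)`. -/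
theorem count_isotropic_sublattices (n : ℕ) (hn : 0 < n) :
    (∀ Λ : AddSubgroup ((ℤ × ℤ) × (ℤ × ℤ)),
      (Λ.index = n ∧ ∀ v ∈ Λ, ∀ w ∈ Λ, (n : ℤ) ∣ symplecticFormA n v w) ↔
      (∃ Λ' : AddSubgroup (ℤ × ℤ), Λ'.index = n ∧ Λ = Λ'.prod ⊤)) ∧
    Nat.card {Λ : AddSubgroup ((ℤ × ℤ) × (ℤ × ℤ)) //
        Λ.index = n ∧ ∀ v ∈ Λ, ∀ w ∈ Λ, (n : ℤ) ∣ symplecticFormA n v w} =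
      ∑ d ∈ n.divisors, d := by
  have hnz : n ≠ 0 := hn.ne'
  set F := AddMonoidHom.fst (ℤ × ℤ) (ℤ × ℤ) with hF
  have hFsurj : Function.Surjective F := fun x => ⟨(x, 0), rfl⟩
  have key : ∀ Λ : AddSubgroup ((ℤ × ℤ) × (ℤ × ℤ)),
      (Λ.index = n ∧ ∀ v ∈ Λ, ∀ w ∈ Λ, (n : ℤ) ∣ symplecticFormA n v w) ↔
      (∃ Λ' : AddSubgroup (ℤ × ℤ), Λ'.index = n ∧ Λ = Λ'.prod ⊤) := by
    intro Λ
    constructor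
    · rintro ⟨hidx, hdvd⟩
      set P := Λ.map F with hP
      have hle : Λ ≤ P.comap F := fun v hv => AddSubgroup.mem_comap.mpr ⟨v, hv, rfl⟩
      have hPC : (P.comap F).index = P.index := AddSubgroup.index_comap_of_surjective _ hFsurj
      have hPdvd : P.index ∣ n := by
        rw [← hPC, ← hidx]
        exact AddSubgroup.index_dvd_of_le hle
      have hPne : P.index ≠ 0 := by
        intro h
        rw [h] at hPdvd
        omega
      obtain ⟨a, d, b, hapos, hdpos, hb0, hba, hPeq⟩ := classify hPne
      have haP : (((a : ℕ) : ℤ), (0:ℤ)) ∈ P := by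
        rw [hPeq]
        exact mem_latL.mpr ⟨1, 0, by simp, by simp⟩
      have hbP : (b, ((d : ℕ) : ℤ)) ∈ P := by
        rw [hPeq]
        exact mem_latL.mpr ⟨0, 1, by simp, by simp⟩
      obtain ⟨v, hv, hv1⟩ := AddSubgroup.mem_map.mp haP
      obtain ⟨w, hw, hw1⟩ := AddSubgroup.mem_map.mp hbP
      have hv11 : v.1.1 = (a : ℤ) := by rw [show v.1 = F v from rfl, hv1]
      have hv12 : v.1.2 = (0 : ℤ) := by rw [show v.1 = F v from rfl, hv1]
      have hw11 : w.1.1 = b := by rw [show w.1 = F w from rfl, hw1]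
      have hw12 : w.1.2 = ((d : ℕ) : ℤ) := by rw [show w.1 = F w from rfl, hw1]
      have hnd : (n : ℤ) ∣ (a : ℤ) * (d : ℤ) := by
        obtain ⟨c, hc⟩ := hdvd v hv w hw
        refine ⟨c - (v.2.1 * w.2.2 - w.2.1 * v.2.2), ?_⟩
        have hform : symplecticFormA n v w =
            (a : ℤ) * d + (n : ℤ) * (v.2.1 * w.2.2 - w.2.1 * v.2.2) := by
          unfold symplecticFormA
          rw [hv11, hv12, hw11, hw12]
          ring
        rw [hform] at hc
        linarith [hc]
      have hPidx : P.index = a * d := by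
        rw [hPeq]
        exact latL_index _ _ _ hapos hdpos
      have hnad : a * d = n := by
        refine Nat.dvd_antisymm (hPidx ▸ hPdvd) ?_
        exact_mod_cast hnd
      have hPn : P.index = n := by rw [hPidx, hnad]
      refine ⟨P, hPn, ?_⟩
      rw [prod_top_eq_comap]
      have h1 := AddSubgroup.relIndex_mul_index hle
      rw [hPC, hPn, hidx] at h1
      have h2 : Λ.relIndex (P.comap F) = 1 :=
        Nat.eq_of_mul_eq_mul_right hn (by rw [one_mul, h1])
      exact le_antisymm hle (AddSubgroup.relIndex_eq_one.mp h2)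
    · rintro ⟨Λ', hidx', rfl⟩
      have hcomap := prod_top_eq_comap Λ'
      constructor
      · rw [hcomap, AddSubgroup.index_comap_of_surjective _ hFsurj, hidx']
      · intro v hv w hw
        have hv1 : v.1 ∈ Λ' := (AddSubgroup.mem_prod.mp hv).1
        have hw1 : w.1 ∈ Λ' := (AddSubgroup.mem_prod.mp hw).1
        obtain ⟨a, d, b, hapos, hdpos, hb0, hba, hPeq⟩ :=
          classify (show Λ'.index ≠ 0 by rw [hidx']; exact hnz)
        have hadn : ((a : ℤ) * (d : ℤ)) = (n : ℤ) := by
          have : a * d = n := by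
            rw [← hidx', hPeq]
            exact (latL_index _ _ _ hapos hdpos).symm
          exact_mod_cast this
        rw [hPeq] at hv1 hw1
        obtain ⟨j, k, hj1, hj2⟩ := mem_latL.mp hv1
        obtain ⟨j', k', hj1', hj2'⟩ := mem_latL.mp hw1
        refine ⟨(j * k' - j' * k) + (v.2.1 * w.2.2 - w.2.1 * v.2.2), ?_⟩
        unfold symplecticFormA
        rw [hj1, hj2, hj1', hj2', mul_add, ← hadn]
        ring
  refine ⟨key, ?_⟩
  set e : {Λ' : AddSubgroup (ℤ × ℤ) // Λ'.index = n} →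
      {Λ : AddSubgroup ((ℤ × ℤ) × (ℤ × ℤ)) //
        Λ.index = n ∧ ∀ v ∈ Λ, ∀ w ∈ Λ, (n : ℤ) ∣ symplecticFormA n v w} :=
    fun q => ⟨q.1.prod ⊤, (key _).mpr ⟨q.1, q.2, rfl⟩⟩ with he
  have hbij : Function.Bijective e := by
    constructor
    · rintro ⟨Λ₁, h1⟩ ⟨Λ₂, h2⟩ hee
      simp only [he, Subtype.mk_eq_mk] at hee ⊢
      ext x
      have h3 : (x, ((0,0) : ℤ × ℤ)) ∈ Λ₁.prod (⊤ : AddSubgroup (ℤ × ℤ)) ↔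
          (x, ((0,0) : ℤ × ℤ)) ∈ Λ₂.prod (⊤ : AddSubgroup (ℤ × ℤ)) := by rw [hee]
      simpa [AddSubgroup.mem_prod] using h3
    · rintro ⟨Λ, hΛ⟩
      obtain ⟨Λ', h1, h2⟩ := (key Λ).mp hΛ
      exact ⟨⟨Λ', h1⟩, Subtype.ext h2.symm⟩
  rw [← Nat.card_congr (Equiv.ofBijective e hbij)]
  exact card_index_n n hn
end

section
/- If f(q) and g(q) are formal power series over a commutative ring (ℚ, say) with g(q) having zero constant term and invertible linear coefficient, then for every k ≥ 0 the coefficient of g(q)^k in the expansion of f(q) as a power series in g(q) equals the coefficient of q⁰ in the Laurent series f(q)·(q·g'(q))/g(q)^{k+1}. -/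
open PowerSeries
-- residue-type key lemma
lemma aux_coeff (u : ℚ⟦X⟧) (hu : constantCoeff u ≠ 0) (n : ℕ) :
    coeff (n+1) (u⁻¹^(n+1)) + coeff n (d⁄dX ℚ u * u⁻¹^(n+2)) = 0 := by
  set v := u⁻¹ with hv
  have hdv : d⁄dX ℚ v = -v^2 * d⁄dX ℚ u := derivative_inv' u
  have h1 : d⁄dX ℚ (v^(n+1)) = PowerSeries.C ((n:ℚ)+1) * (-(d⁄dX ℚ u * v^(n+2))) := by
    rw [Derivation.leibniz_pow (D := PowerSeries.derivative ℚ) (a := v) (n+1), hdv]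
    simp only [smul_eq_mul, nsmul_eq_mul, Nat.add_sub_cancel]
    have hc : ((n+1 : ℕ) : ℚ⟦X⟧) = PowerSeries.C ((n:ℚ)+1) := by
      push_cast; simp
    rw [hc]
    ring
  have h2 := coeff_derivative (v^(n+1)) n
  rw [h1] at h2
  rw [coeff_C_mul] at h2
  have h3 : ((n:ℚ)+1) * (coeff (n+1) (v^(n+1)) + coeff n (d⁄dX ℚ u * v^(n+2))) = 0 := by
    have := h2
    simp only [map_neg] at this
    push_cast at this ⊢
    linarith [this]
  have hne : ((n:ℚ)+1) ≠ 0 := by positivity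
  exact (mul_eq_zero.mp h3).resolve_left hne

lemma aux_term (u : ℚ⟦X⟧) (hu : constantCoeff u ≠ 0) (j k : ℕ) (hjk : j ≤ k) :
    coeff (k+1) ((PowerSeries.X * u)^j * (PowerSeries.X * (u + PowerSeries.X * d⁄dX ℚ u)) * u⁻¹^(k+1))
      = if j = k then 1 else 0 := by
  obtain ⟨m, rfl⟩ := Nat.exists_eq_add_of_le hjk
  set v := u⁻¹ with hv
  have huv : u * v = 1 := PowerSeries.mul_inv_cancel u hu
  have hid : (PowerSeries.X * u)^j * (PowerSeries.X * (u + PowerSeries.X * d⁄dX ℚ u)) * v^(j+m+1)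
      = PowerSeries.X^(j+1) * (v^m + PowerSeries.X * (d⁄dX ℚ u * v^(m+1))) := by
    have h2 : u^(j+1) * v^(j+1) = 1 := by rw [← mul_pow, huv, one_pow]
    have h3 : u^j * v^j = 1 := by rw [← mul_pow, huv, one_pow]
    linear_combination (PowerSeries.X^(j+1) * v^m) * h2 + (PowerSeries.X^(j+2) * d⁄dX ℚ u * v^(m+1)) * h3
  rw [hid]
  rw [PowerSeries.coeff_X_pow_mul']
  have hm : j + m + 1 - (j+1) = m := by omega
  rw [hm, if_pos (by omega : j+1 ≤ j+m+1)]
  rcases m with _ | n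
  · simp
  · have hij : ¬ (j = j + (n+1)) := by omega
    rw [if_neg hij, map_add, coeff_succ_X_mul]
    have := aux_coeff u hu n
    rw [← hv] at this
    simpa using this




/-- If `g ∈ ℚ[[q]]` has zero constant term and invertible linear coefficient, and
`f = ∑_k c_k g^k`, then `c_k` is the `q⁰`-coefficient of the formal Laurent series
`f·Dg/g^{k+1}`, where `D = q d/dq`. -/
theorem coeff_in_g_expansion_eq_residue (f g : PowerSeries ℚ) (c : ℕ → ℚ)
    (h0 : PowerSeries.constantCoeff g = 0)
    (h1 : PowerSeries.coeff 1 g ≠ 0)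
    (hrep : ∀ N : ℕ, PowerSeries.coeff N f =
      PowerSeries.coeff N (∑ k ∈ Finset.range (N + 1), PowerSeries.C (c k) * g ^ k))
    (k : ℕ) :
    c k = ((HahnSeries.ofPowerSeries ℤ ℚ
            (f * PowerSeries.mk fun n => (n : ℚ) * PowerSeries.coeff n g) :
            LaurentSeries ℚ) /
          (HahnSeries.ofPowerSeries ℤ ℚ g : LaurentSeries ℚ) ^ (k + 1)).coeff 0 := by
  obtain ⟨u, hg⟩ : ∃ u, g = PowerSeries.X * u := PowerSeries.X_dvd_iff.mpr h0
  have hu : constantCoeff u ≠ 0 := by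
    rw [hg] at h1
    rwa [show (1:ℕ) = 0 + 1 from rfl, coeff_succ_X_mul, coeff_zero_eq_constantCoeff] at h1
  set v := u⁻¹ with hv
  have huv : u * v = 1 := PowerSeries.mul_inv_cancel u hu
  set Dg := PowerSeries.mk fun n => (n : ℚ) * PowerSeries.coeff n g with hDg
  have hDgeq : Dg = PowerSeries.X * (u + PowerSeries.X * d⁄dX ℚ u) := by
    have hdg : d⁄dX ℚ g = u + PowerSeries.X * d⁄dX ℚ u := by
      rw [hg, Derivation.leibniz]
      simp [smul_eq_mul, mul_comm, add_comm]
    ext n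
    rcases n with _ | n
    · simp [hDg, coeff_mk, coeff_zero_eq_constantCoeff]
    · rw [← hdg, hDg, coeff_mk, coeff_succ_X_mul, coeff_derivative]
      push_cast
      ring
  set S := ∑ j ∈ Finset.range (k+1), PowerSeries.C (c j) * g^j with hS
  -- tail divisibility
  have hdvd : PowerSeries.X^(k+1) ∣ f - S := by
    rw [PowerSeries.X_pow_dvd_iff]
    intro n hn
    have hcS : coeff n S = coeff n (∑ j ∈ Finset.range (n+1), PowerSeries.C (c j) * g^j) := by
      rw [hS, map_sum, map_sum]
      refine (Finset.sum_subset (Finset.range_subset_range.mpr (by omega)) ?_).symm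
      intro j hj hj'
      simp only [Finset.mem_range] at hj hj'
      have hdj : PowerSeries.X^j ∣ g^j := pow_dvd_pow_of_dvd (PowerSeries.X_dvd_iff.mpr h0) j
      have : coeff n (g^j) = 0 := (PowerSeries.X_pow_dvd_iff.mp hdj) n (by omega)
      rw [coeff_C_mul, this, mul_zero]
    rw [map_sub, hrep n, hcS, sub_self]
  obtain ⟨h, hh⟩ := hdvd
  have hf : f = S + PowerSeries.X^(k+1) * h := by
    rw [← hh]; ring
  -- the main power-series coefficient computation
  have hmain : coeff (k+1) (f * Dg * v^(k+1)) = c k := by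
    rw [hf, add_mul, add_mul, map_add]
    have htail : coeff (k+1) (PowerSeries.X^(k+1) * h * Dg * v^(k+1)) = 0 := by
      have : PowerSeries.X^(k+1) * h * Dg * v^(k+1)
          = PowerSeries.X^(k+1) * (h * Dg * v^(k+1)) := by ring
      rw [this, PowerSeries.coeff_X_pow_mul' , if_pos le_rfl, Nat.sub_self,
        coeff_zero_eq_constantCoeff, map_mul, map_mul]
      have : constantCoeff Dg = 0 := by
        rw [hDg]
        simpa [← coeff_zero_eq_constantCoeff] using (by simp : coeff 0 (PowerSeries.mk fun n => (n : ℚ) * PowerSeries.coeff n g) = 0)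
      rw [this]; ring
    rw [htail, add_zero]
    have hsum : S * Dg * v^(k+1) = ∑ j ∈ Finset.range (k+1),
        PowerSeries.C (c j) * (g^j * Dg * v^(k+1)) := by
      rw [hS, Finset.sum_mul, Finset.sum_mul]
      refine Finset.sum_congr rfl fun j _ => by ring
    rw [hsum, map_sum]
    have hterm : ∀ j ∈ Finset.range (k+1),
        coeff (k+1) (PowerSeries.C (c j) * (g^j * Dg * v^(k+1)))
          = if j = k then c j else 0 := by
      intro j hj
      rw [coeff_C_mul, hg, hDgeq, aux_term u hu j k (by simpa using Nat.lt_succ_iff.mp (Finset.mem_range.mp hj))]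
      split <;> simp
    rw [Finset.sum_congr rfl hterm]
    simp
  -- Laurent series bookkeeping
  have hgne : g ≠ 0 := fun hz => h1 (by simp [hz])
  have hFgne : (HahnSeries.ofPowerSeries ℤ ℚ g : LaurentSeries ℚ) ≠ 0 := by
    intro hz
    apply hgne
    have := HahnSeries.ofPowerSeries_injective (Γ := ℤ) (R := ℚ)
    apply this
    simpa using hz
  have hdiv : (HahnSeries.ofPowerSeries ℤ ℚ (f * Dg) : LaurentSeries ℚ) /
        (HahnSeries.ofPowerSeries ℤ ℚ g : LaurentSeries ℚ)^(k+1)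
      = HahnSeries.ofPowerSeries ℤ ℚ (f * Dg * v^(k+1)) * HahnSeries.single (-(k+1:ℤ)) 1 := by
    rw [div_eq_iff (pow_ne_zero _ hFgne)]
    have e1 : (HahnSeries.ofPowerSeries ℤ ℚ g : LaurentSeries ℚ)^(k+1)
        = HahnSeries.single ((k+1 : ℕ) : ℤ) (1:ℚ) * HahnSeries.ofPowerSeries ℤ ℚ (u^(k+1)) := by
      rw [← map_pow, hg, mul_pow, map_mul, HahnSeries.ofPowerSeries_X_pow]
    rw [e1]
    rw [show (HahnSeries.ofPowerSeries ℤ ℚ (f * Dg * v ^ (k + 1)) * HahnSeries.single (-(k+1:ℤ)) 1) *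
        (HahnSeries.single ((k+1 : ℕ) : ℤ) (1:ℚ) * HahnSeries.ofPowerSeries ℤ ℚ (u^(k+1)))
      = (HahnSeries.ofPowerSeries ℤ ℚ (f * Dg * v ^ (k + 1)) * HahnSeries.ofPowerSeries ℤ ℚ (u^(k+1))) *
        (HahnSeries.single (-(k+1:ℤ)) 1 * HahnSeries.single ((k+1 : ℕ) : ℤ) (1:ℚ)) from by ring]
    rw [HahnSeries.single_mul_single, ← map_mul]
    have e2 : f * Dg * v ^ (k + 1) * u ^ (k + 1) = f * Dg := by
      rw [mul_assoc, ← mul_pow, mul_comm v u, huv, one_pow, mul_one]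
    have e3 : (-(k+1:ℤ)) + ((k+1 : ℕ) : ℤ) = 0 := by push_cast; ring
    rw [e2, e3]
    simp
  rw [hdiv]
  have e4 : (0:ℤ) = ((k+1 : ℕ) : ℤ) + (-(k+1:ℤ)) := by push_cast; ring
  rw [e4, HahnSeries.coeff_mul_single_add, HahnSeries.ofPowerSeries_apply_coeff, mul_one, hmain]
end

section
/- Suppose for every smooth projective surface S and sufficiently ample line bundle L the generating function T(S,L) = ∑_δ t_δ(S,L) x^δ satisfies the multiplicativity property T(S₁ ⊔ S₂, L₁ ⊔ L₂) = T(S₁,L₁)·T(S₂,L₂), and each t_δ is a universal polynomial of degree δ in (L², L·K_S, K_S², c₂(S)). Then there exist four universal power series A₁, A₂, A₃, A₄ ∈ ℚ[[x]] such that T(S,L) = exp(L²·A₁ + L·K_S·A₂ + K_S²·A₃ + c₂(S)·A₄). Abstractly: if φ : ℚ⁴ → ℚ[[x]] is a map such that φ(v) has constant term 1 for all v, φ(v+w) = φ(v)·φ(w) whenever v, w, v+w lie in a Zariski-dense subset closed under addition spanning ℚ⁴, and each coefficient of φ(v) is a polynomial function of v, then each coefficient of log φ(v) is a linear function of v, i.e.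 φ(v) = exp(v₁A₁ + v₂A₂ + v₃A₃ + v₄A₄) for fixed power series A_i. -/
open PowerSeries Finset


/-- The exponential of a power series with zero constant term, defined coefficientwise
by truncation: `exp(f) = ∑_k f^k/k!`. -/
noncomputable def expPS (f : PowerSeries ℚ) : PowerSeries ℚ :=
  PowerSeries.mk fun n =>
    PowerSeries.coeff n (∑ k ∈ Finset.range (n + 1), (k.factorial : ℚ)⁻¹ • f ^ k)

lemma coeff_pow_eq_zero {f : PowerSeries ℚ} (hf : constantCoeff f = 0) {k n : ℕ}
    (h : n < k) : PowerSeries.coeff n (f ^ k) = 0 := by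
  have hd : (X : PowerSeries ℚ) ^ k ∣ f ^ k :=
    pow_dvd_pow_of_dvd (PowerSeries.X_dvd_iff.mpr hf) k
  exact (PowerSeries.X_pow_dvd_iff.mp hd) n h

lemma coeff_mul_pow_eq_zero {f g : PowerSeries ℚ} (hf : constantCoeff f = 0)
    (hg : constantCoeff g = 0) {i j n : ℕ} (h : n < i + j) :
    PowerSeries.coeff n (f ^ i * g ^ j) = 0 := by
  have hd : (X : PowerSeries ℚ) ^ (i + j) ∣ f ^ i * g ^ j := by
    rw [pow_add]
    exact mul_dvd_mul (pow_dvd_pow_of_dvd (PowerSeries.X_dvd_iff.mpr hf) i)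
      (pow_dvd_pow_of_dvd (PowerSeries.X_dvd_iff.mpr hg) j)
  exact (PowerSeries.X_pow_dvd_iff.mp hd) n h

lemma coeff_expPS_stable {f : PowerSeries ℚ} (hf : constantCoeff f = 0) {n N : ℕ}
    (h : n ≤ N) : PowerSeries.coeff n (expPS f) =
      PowerSeries.coeff n (∑ k ∈ Finset.range (N + 1), (k.factorial : ℚ)⁻¹ • f ^ k) := by
  rw [expPS, coeff_mk, map_sum, map_sum]
  apply Finset.sum_subset (Finset.range_subset_range.mpr (by omega))
  intro k hk hk'
  rw [map_smul]
  rw [Finset.mem_range] at hk'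
  rw [coeff_pow_eq_zero hf (by omega)]
  simp

-- pow coefficients agree if coefficients agree below n (for k ≥ 2)
lemma coeff_pow_congr {f g : PowerSeries ℚ} (hf : constantCoeff f = 0)
    (hg : constantCoeff g = 0) {n : ℕ}
    (hagree : ∀ m < n, PowerSeries.coeff m f = PowerSeries.coeff m g)
    {k : ℕ} (hk : 2 ≤ k) :
    PowerSeries.coeff n (f ^ k) = PowerSeries.coeff n (g ^ k) := by
  have hd : (X : PowerSeries ℚ) ^ (n + 1) ∣ f ^ k - g ^ k := by
    rw [← geom_sum₂_mul, pow_add, pow_one, mul_comm ((X : PowerSeries ℚ) ^ n)]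
    apply mul_dvd_mul
    · apply Finset.dvd_sum
      intro i _
      rcases Nat.eq_zero_or_pos i with h0 | h0
      · subst h0
        have : 1 ≤ k - 1 - 0 := by omega
        exact Dvd.dvd.mul_left
          (dvd_trans (PowerSeries.X_dvd_iff.mpr hg) (dvd_pow_self g (by omega))) _
      · exact Dvd.dvd.mul_right
          (dvd_trans (PowerSeries.X_dvd_iff.mpr hf) (dvd_pow_self f (by omega))) _
    · rw [PowerSeries.X_pow_dvd_iff]
      intro m hm
      rw [map_sub, hagree m hm, sub_self]
  have := (PowerSeries.X_pow_dvd_iff.mp hd) n (by omega)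
  rw [map_sub, sub_eq_zero] at this
  exact this

lemma key {f g : PowerSeries ℚ} (hf : constantCoeff f = 0) (hg : constantCoeff g = 0)
    {n : ℕ} (hagree : ∀ m < n, PowerSeries.coeff m f = PowerSeries.coeff m g) :
    PowerSeries.coeff n (expPS f) - PowerSeries.coeff n (expPS g) =
      PowerSeries.coeff n f - PowerSeries.coeff n g := by
  rw [expPS, expPS, coeff_mk, coeff_mk, map_sum, map_sum, ← Finset.sum_sub_distrib]
  have hsingle : ∀ b ∈ Finset.range (n + 1), b ≠ 1 →
      (PowerSeries.coeff n) ((b.factorial : ℚ)⁻¹ • f ^ b) -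
        (PowerSeries.coeff n) ((b.factorial : ℚ)⁻¹ • g ^ b) = 0 := by
    intro b _ hb1
    rcases Nat.eq_zero_or_pos b with h0 | h0
    · subst h0; simp
    · have hb2 : 2 ≤ b := by omega
      rw [map_smul, map_smul, coeff_pow_congr hf hg hagree hb2, sub_self]
  rw [Finset.sum_eq_single 1 hsingle]
  · simp
  · intro h1
    have : n = 0 := by
      rw [Finset.mem_range] at h1; omega
    subst this
    simp [hf, hg]

lemma expPS_injOn {f g : PowerSeries ℚ} (hf : constantCoeff f = 0)
    (hg : constantCoeff g = 0) (h : expPS f = expPS g) : f = g := by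
  ext n
  induction n using Nat.strong_induction_on with
  | _ n ih =>
    have := key hf hg (n := n) (fun m hm => ih m hm)
    rw [h, sub_self] at this
    linarith [this.symm]

lemma expPS_add {f g : PowerSeries ℚ} (hf : constantCoeff f = 0)
    (hg : constantCoeff g = 0) : expPS (f + g) = expPS f * expPS g := by
  ext n
  set u : ℕ × ℕ → ℚ := fun p => (p.1.factorial : ℚ)⁻¹ * (p.2.factorial : ℚ)⁻¹ *
    PowerSeries.coeff n (f ^ p.1 * g ^ p.2) with hu
  have hL : PowerSeries.coeff n (expPS (f + g)) =
      ∑ k ∈ Finset.range (n + 1), ∑ p ∈ Finset.HasAntidiagonal.antidiagonal k, u p := by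
    rw [expPS, coeff_mk, map_sum]
    apply Finset.sum_congr rfl
    intro k _
    rw [map_smul, smul_eq_mul, add_pow, map_sum, Finset.mul_sum,
      ← Finset.Nat.sum_antidiagonal_eq_sum_range_succ_mk
        (f := fun p => (k.factorial : ℚ)⁻¹ * PowerSeries.coeff n (f ^ p.1 * g ^ p.2 * ((k.choose p.1 : ℕ) : PowerSeries ℚ)))]
    apply Finset.sum_congr rfl
    intro p hp
    rw [Finset.HasAntidiagonal.mem_antidiagonal] at hp
    have hi : p.1 ≤ k := by omega
    have hcast : (p.1 + p.2).choose p.1 = k.choose p.1 := by rw [hp]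
    rw [show (k.choose p.1 : PowerSeries ℚ) = ((k.choose p.1 : ℚ) • (1 : PowerSeries ℚ)) by
        rw [Algebra.smul_def, mul_one, map_natCast]]
    rw [mul_comm (f ^ p.1 * g ^ p.2), smul_mul_assoc, one_mul, map_smul, smul_eq_mul]
    have h1 : (p.1.factorial : ℚ) ≠ 0 := Nat.cast_ne_zero.mpr (Nat.factorial_ne_zero _)
    have h2 : (p.2.factorial : ℚ) ≠ 0 := Nat.cast_ne_zero.mpr (Nat.factorial_ne_zero _)
    have h3 : (k.factorial : ℚ) ≠ 0 := Nat.cast_ne_zero.mpr (Nat.factorial_ne_zero _)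
    have hfact : ((k.choose p.1 : ℚ)) * (p.1.factorial : ℚ) * ((k - p.1).factorial : ℚ)
        = (k.factorial : ℚ) := by
      exact_mod_cast congrArg (Nat.cast (R := ℚ)) (Nat.choose_mul_factorial_mul_factorial hi)
    have hk2 : k - p.1 = p.2 := by omega
    rw [hk2] at hfact
    have hsc : (k.factorial : ℚ)⁻¹ * (k.choose p.1 : ℚ) =
        (p.1.factorial : ℚ)⁻¹ * (p.2.factorial : ℚ)⁻¹ := by
      field_simp
      linear_combination hfact
    rw [hu]
    rw [← mul_assoc, hsc]
  have hR : PowerSeries.coeff n (expPS f * expPS g) =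
      ∑ p ∈ Finset.range (n + 1) ×ˢ Finset.range (n + 1), u p := by
    rw [PowerSeries.coeff_mul]
    have hterm : ∀ p ∈ Finset.HasAntidiagonal.antidiagonal n,
        PowerSeries.coeff p.1 (expPS f) * PowerSeries.coeff p.2 (expPS g) =
        ∑ q ∈ Finset.range (n + 1) ×ˢ Finset.range (n + 1),
          (q.1.factorial : ℚ)⁻¹ * (q.2.factorial : ℚ)⁻¹ *
            (PowerSeries.coeff p.1 (f ^ q.1) * PowerSeries.coeff p.2 (g ^ q.2)) := by
      intro p hp
      rw [Finset.HasAntidiagonal.mem_antidiagonal] at hp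
      rw [coeff_expPS_stable hf (show p.1 ≤ n by omega),
        coeff_expPS_stable hg (show p.2 ≤ n by omega), map_sum, map_sum,
        Finset.sum_mul_sum, ← Finset.sum_product']
      apply Finset.sum_congr rfl
      intro q _
      simp only [map_smul, smul_eq_mul]
      ring
    rw [Finset.sum_congr rfl hterm, Finset.sum_comm]
    apply Finset.sum_congr rfl
    intro q _
    rw [← Finset.mul_sum, ← PowerSeries.coeff_mul]
  rw [hL, hR]
  have hbi : (Finset.range (n + 1)).biUnion Finset.HasAntidiagonal.antidiagonal =
      Finset.filter (fun p : ℕ × ℕ => p.1 + p.2 ≤ n)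
        (Finset.range (n + 1) ×ˢ Finset.range (n + 1)) := by
    ext p
    simp only [Finset.mem_biUnion, Finset.HasAntidiagonal.mem_antidiagonal, Finset.mem_filter,
      Finset.mem_product, Finset.mem_range, Nat.lt_succ_iff]
    constructor
    · rintro ⟨k, hk, rfl⟩
      omega
    · intro h
      exact ⟨p.1 + p.2, by omega, rfl⟩
  have hdisj : (↑(Finset.range (n + 1)) : Set ℕ).PairwiseDisjoint Finset.HasAntidiagonal.antidiagonal := by
    intro a _ b _ hab
    apply Finset.disjoint_left.mpr
    intro p hp hp'
    rw [Finset.HasAntidiagonal.mem_antidiagonal] at hp hp'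
    omega
  rw [← Finset.sum_biUnion hdisj, hbi]
  apply Finset.sum_subset (Finset.filter_subset _ _)
  intro p hp hp'
  rw [Finset.mem_filter] at hp'
  have hlt : n < p.1 + p.2 := by
    by_contra hle
    exact hp' ⟨hp, by omega⟩
  rw [hu]
  simp only
  rw [coeff_mul_pow_eq_zero hf hg hlt, mul_zero]

lemma coeff_zero_expPS (f : PowerSeries ℚ) : PowerSeries.coeff 0 (expPS f) = 1 := by
  rw [expPS, coeff_mk]
  simp

noncomputable def expInvC (h : PowerSeries ℚ) : ℕ → ℚ
  | n => PowerSeries.coeff n h -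
      PowerSeries.coeff n (expPS (PowerSeries.mk fun m =>
        if _ : m < n then expInvC h m else 0))
  termination_by n => n
  decreasing_by exact ‹_ < n›

lemma expInvC_zero {h : PowerSeries ℚ} (hh : constantCoeff h = 1) : expInvC h 0 = 0 := by
  rw [expInvC]
  rw [show PowerSeries.coeff 0 h = 1 by rwa [coeff_zero_eq_constantCoeff]]
  rw [coeff_zero_expPS]
  ring

lemma expPS_expInv {h : PowerSeries ℚ} (hh : constantCoeff h = 1) :
    expPS (PowerSeries.mk (expInvC h)) = h := by
  have hc0 : expInvC h 0 = 0 := expInvC_zero hh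
  ext n
  set g : PowerSeries ℚ := PowerSeries.mk fun m => if _ : m < n then expInvC h m else 0 with hgdef
  have hfc : constantCoeff (PowerSeries.mk (expInvC h)) = 0 := by
    rw [← coeff_zero_eq_constantCoeff, coeff_mk]; exact hc0
  have hgc : constantCoeff g = 0 := by
    rw [← coeff_zero_eq_constantCoeff, hgdef, coeff_mk]
    rcases Nat.eq_zero_or_pos n with h0 | h0
    · simp [h0]
    · simp only [h0, dif_pos]; exact hc0
  have hagree : ∀ m < n, PowerSeries.coeff m (PowerSeries.mk (expInvC h)) =
      PowerSeries.coeff m g := by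
    intro m hm
    rw [coeff_mk, hgdef, coeff_mk, dif_pos hm]
  have hk := key hfc hgc hagree
  rw [coeff_mk, hgdef, coeff_mk, dif_neg (lt_irrefl n)] at hk
  have hrec : expInvC h n = PowerSeries.coeff n h - PowerSeries.coeff n (expPS g) := by
    rw [expInvC]
  rw [← hgdef] at hk
  linarith [hk, hrec]


lemma grid_zero : ∀ (n : ℕ) (P : MvPolynomial (Fin n) ℚ),
    (∀ c : Fin n → ℚ, (∀ i, ∃ m : ℕ, c i = (m : ℚ) + 1) → MvPolynomial.eval c P = 0) →
    P = 0 := by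
  intro n
  induction n with
  | zero =>
    intro P h
    have hc := h (fun i => i.elim0) (fun i => i.elim0)
    rw [MvPolynomial.eq_C_of_isEmpty P] at hc ⊢
    rw [MvPolynomial.eval_C] at hc
    rw [hc, map_zero]
  | succ n ih =>
    intro P h
    have hP' : MvPolynomial.finSuccEquiv ℚ n P = 0 := by
      apply Polynomial.ext
      intro k
      rw [Polynomial.coeff_zero]
      apply ih
      intro c hc
      have hroots : Polynomial.map (MvPolynomial.eval c) (MvPolynomial.finSuccEquiv ℚ n P) = 0 := by
        apply Polynomial.eq_zero_of_infinite_isRoot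
        apply Set.Infinite.mono (s := Set.range (fun m : ℕ => (m : ℚ) + 1))
        · rintro x ⟨m, rfl⟩
          show Polynomial.IsRoot _ _
          rw [Polynomial.IsRoot, ← MvPolynomial.eval_eq_eval_mv_eval']
          refine h (Fin.cons ((m : ℚ) + 1) c) ?_
          intro i
          refine Fin.cases ?_ ?_ i
          · exact ⟨m, rfl⟩
          · intro j
            simpa using hc j
        · exact Set.infinite_range_of_injective (fun a b hab => by
            field_simp at hab; exact_mod_cast add_right_cancel hab)
      have hck := congrArg (fun q => Polynomial.coeff q k) hroots
      simpa [Polynomial.coeff_map] using hck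
    have := congrArg (MvPolynomial.finSuccEquiv ℚ n).symm hP'
    simpa using this

lemma posint_combo_mem {ι : Type*} [Fintype ι] [DecidableEq ι] [Nonempty ι]
    (T : Set (ι → ℚ)) (hTadd : ∀ v ∈ T, ∀ w ∈ T, v + w ∈ T)
    (β : ι → (ι → ℚ)) (hβ : ∀ i, β i ∈ T)
    (c : ι → ℚ) (hc : ∀ i, ∃ m : ℕ, c i = (m : ℚ) + 1) :
    ∑ i, c i • β i ∈ T := by
  have hsmul : ∀ (m : ℕ) (v), v ∈ T → ((m : ℚ) + 1) • v ∈ T := by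
    intro m
    induction m with
    | zero => intro v hv; simpa using hv
    | succ m ihm =>
      intro v hv
      have := hTadd _ (ihm v hv) _ hv
      convert this using 1
      push_cast
      module
  classical
  have key : ∀ (t : Finset ι), t.Nonempty → ∑ i ∈ t, c i • β i ∈ T := by
    intro t ht
    induction ht using Finset.Nonempty.cons_induction with
    | singleton a =>
      obtain ⟨m, hm⟩ := hc a
      rw [Finset.sum_singleton, hm]
      exact hsmul m _ (hβ a)
    | cons a s ha hs ih =>
      rw [Finset.sum_cons]
      apply hTadd
      · obtain ⟨m, hm⟩ := hc a
        rw [hm]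
        exact hsmul m _ (hβ a)
      · exact ih
  exact key Finset.univ Finset.univ_nonempty

lemma dense_zero {ι : Type} [Fintype ι] [DecidableEq ι] [Nonempty ι]
    (T : Set (ι → ℚ)) (hTadd : ∀ v ∈ T, ∀ w ∈ T, v + w ∈ T)
    (hTspan : Submodule.span ℚ T = ⊤)
    (P : MvPolynomial ι ℚ) (hP : ∀ v ∈ T, MvPolynomial.eval v P = 0) :
    ∀ v, MvPolynomial.eval v P = 0 := by
  classical
  obtain ⟨s, hsT, hspan, hli⟩ := exists_linearIndependent ℚ T
  have hspan' : ⊤ ≤ Submodule.span ℚ (Set.range ((↑) : s → (ι → ℚ))) := by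
    rw [Subtype.range_coe, hspan, hTspan]
  let b0 : Module.Basis s ℚ (ι → ℚ) := Module.Basis.mk hli hspan'
  let e : s ≃ ι := b0.indexEquiv (Pi.basisFun ℚ ι)
  let b : Module.Basis ι ℚ (ι → ℚ) := b0.reindex e
  have hbT : ∀ i, b i ∈ T := by
    intro i
    have : b i = b0 (e.symm i) := by simp [b]
    rw [this]
    have : b0 (e.symm i) = ((e.symm i : s) : ι → ℚ) := by simp [b0, Module.Basis.mk_apply]
    rw [this]
    exact hsT (e.symm i).2
  -- substituted polynomial
  let Q : MvPolynomial ι ℚ :=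
    MvPolynomial.bind₁ (fun j : ι => ∑ i : ι, MvPolynomial.C (b i j) * MvPolynomial.X i) P
  have hQeval : ∀ c : ι → ℚ, MvPolynomial.eval c Q = MvPolynomial.eval (∑ i, c i • b i) P := by
    intro c
    show MvPolynomial.eval c (MvPolynomial.bind₁ _ P) = _
    rw [show (MvPolynomial.eval c : MvPolynomial ι ℚ →+* ℚ) =
      MvPolynomial.eval₂Hom (RingHom.id ℚ) c from rfl]
    rw [MvPolynomial.eval₂Hom_bind₁]
    have harg : (fun j => MvPolynomial.eval c (∑ i : ι, MvPolynomial.C (b i j) * MvPolynomial.X i))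
        = (∑ i : ι, c i • b i) := by
      funext j
      rw [map_sum, Finset.sum_apply]
      apply Finset.sum_congr rfl
      intro i _
      simp [mul_comm]
    exact congrArg (fun f => MvPolynomial.eval f P) harg
  classical
  let κ := Fintype.equivFin ι
  have hQ0 : Q = 0 := by
    have hren := grid_zero (Fintype.card ι) (MvPolynomial.rename ⇑κ Q) ?_
    · exact MvPolynomial.rename_injective _ κ.injective (by rw [hren, map_zero])
    · intro d hd
      rw [MvPolynomial.eval_rename]
      rw [hQeval]
      apply hP
      exact posint_combo_mem T hTadd b hbT (d ∘ ⇑κ) (fun i => hd (κ i))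
  intro v
  have hv : v = ∑ i, b.repr v i • b i := (b.sum_repr v).symm
  calc MvPolynomial.eval v P = MvPolynomial.eval (∑ i, b.repr v i • b i) P := by rw [← hv]
    _ = MvPolynomial.eval (fun i => b.repr v i) Q := (hQeval _).symm
    _ = 0 := by rw [hQ0, map_zero]


/-- If `φ : ℚ⁴ → ℚ[[x]]` has constant term `1`, is multiplicative (`φ(v+w) = φ(v)·φ(w)`)
on an additively closed subset spanning `ℚ⁴`, and its `x^δ`-coefficient is a polynomial
of degree `≤ δ` in `v`, then `φ(v) = exp(v₁A₁ + v₂A₂ + v₃A₃ + v₄A₄)` for universal power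
series `A₁, …, A₄`. -/
theorem multiplicative_generating_function_is_exponential
    (φ : (Fin 4 → ℚ) → PowerSeries ℚ) (S : Set (Fin 4 → ℚ))
    (hconst : ∀ v, PowerSeries.constantCoeff (φ v) = 1)
    (hSadd : ∀ v ∈ S, ∀ w ∈ S, v + w ∈ S)
    (hSspan : Submodule.span ℚ S = ⊤)
    (hmul : ∀ v ∈ S, ∀ w ∈ S, φ (v + w) = φ v * φ w)
    (hpoly : ∀ δ : ℕ, ∃ P : MvPolynomial (Fin 4) ℚ, P.totalDegree ≤ δ ∧
      ∀ v, PowerSeries.coeff δ (φ v) = MvPolynomial.eval v P) :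
    ∃ A : Fin 4 → PowerSeries ℚ,
      (∀ i, PowerSeries.constantCoeff (A i) = 0) ∧
      ∀ v, φ v = expPS (∑ i, v i • A i) := by
  classical
  choose P hPdeg hP using hpoly
  -- S is nonempty
  have hSne : S.Nonempty := by
    rcases Set.eq_empty_or_nonempty S with h | h
    · exfalso
      rw [h, Submodule.span_empty] at hSspan
      have hmem : (Pi.single 0 1 : Fin 4 → ℚ) ∈ (⊥ : Submodule ℚ (Fin 4 → ℚ)) :=
        hSspan ▸ Submodule.mem_top
      rw [Submodule.mem_bot] at hmem
      have := congrFun hmem 0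
      simp [Pi.single_apply] at this
    · exact h
  obtain ⟨s₀, hs₀⟩ := hSne
  -- the doubled set
  let T : Set (Fin 4 ⊕ Fin 4 → ℚ) :=
    {u | (fun i => u (Sum.inl i)) ∈ S ∧ (fun i => u (Sum.inr i)) ∈ S}
  have hTadd : ∀ v ∈ T, ∀ w ∈ T, v + w ∈ T := by
    rintro v ⟨hv1, hv2⟩ w ⟨hw1, hw2⟩
    exact ⟨hSadd _ hv1 _ hw1, hSadd _ hv2 _ hw2⟩
  -- auxiliary linear maps
  let J₁ : (Fin 4 → ℚ) →ₗ[ℚ] (Fin 4 ⊕ Fin 4 → ℚ) :=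
    { toFun := fun a => Sum.elim a 0
      map_add' := by intro a b; funext u; cases u <;> simp
      map_smul' := by intro c a; funext u; cases u <;> simp }
  let J₂ : (Fin 4 → ℚ) →ₗ[ℚ] (Fin 4 ⊕ Fin 4 → ℚ) :=
    { toFun := fun a => Sum.elim 0 a
      map_add' := by intro a b; funext u; cases u <;> simp
      map_smul' := by intro c a; funext u; cases u <;> simp }
  have hJ₁ : ∀ a, J₁ a ∈ Submodule.span ℚ T := by
    have hsub : S ⊆ J₁ ⁻¹' ↑(Submodule.span ℚ T) := by
      intro a ha
      have h1 : Sum.elim (a + s₀) s₀ ∈ T := ⟨hSadd _ ha _ hs₀, hs₀⟩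
      have h2 : Sum.elim s₀ s₀ ∈ T := ⟨hs₀, hs₀⟩
      have heq : J₁ a = Sum.elim (a + s₀) s₀ - Sum.elim s₀ s₀ := by
        funext u; cases u <;> simp [J₁]
      show J₁ a ∈ Submodule.span ℚ T
      rw [heq]
      exact sub_mem (Submodule.subset_span h1) (Submodule.subset_span h2)
    intro a
    have ha : a ∈ Submodule.span ℚ S := by rw [hSspan]; trivial
    have hle : Submodule.span ℚ S ≤ (Submodule.span ℚ T).comap J₁ :=
      Submodule.span_le.mpr hsub
    exact hle ha
  have hJ₂ : ∀ a, J₂ a ∈ Submodule.span ℚ T := by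
    have hsub : S ⊆ J₂ ⁻¹' ↑(Submodule.span ℚ T) := by
      intro a ha
      have h1 : Sum.elim s₀ (a + s₀) ∈ T := ⟨hs₀, hSadd _ ha _ hs₀⟩
      have h2 : Sum.elim s₀ s₀ ∈ T := ⟨hs₀, hs₀⟩
      have heq : J₂ a = Sum.elim s₀ (a + s₀) - Sum.elim s₀ s₀ := by
        funext u; cases u <;> simp [J₂]
      show J₂ a ∈ Submodule.span ℚ T
      rw [heq]
      exact sub_mem (Submodule.subset_span h1) (Submodule.subset_span h2)
    intro a
    have ha : a ∈ Submodule.span ℚ S := by rw [hSspan]; trivial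
    have hle : Submodule.span ℚ S ≤ (Submodule.span ℚ T).comap J₂ :=
      Submodule.span_le.mpr hsub
    exact hle ha
  have hTspan : Submodule.span ℚ T = ⊤ := by
    rw [eq_top_iff]
    intro u _
    have hu : u = J₁ (fun i => u (Sum.inl i)) + J₂ (fun i => u (Sum.inr i)) := by
      funext x; cases x <;> simp [J₁, J₂]
    rw [hu]
    exact add_mem (hJ₁ _) (hJ₂ _)
  -- global multiplicativity
  have hmul' : ∀ v w, φ (v + w) = φ v * φ w := by
    intro v w
    ext δ
    let R : MvPolynomial (Fin 4 ⊕ Fin 4) ℚ :=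
      MvPolynomial.bind₁
        (fun i : Fin 4 => MvPolynomial.X (Sum.inl i) + MvPolynomial.X (Sum.inr i)) (P δ) -
      ∑ pq ∈ Finset.HasAntidiagonal.antidiagonal δ,
        (MvPolynomial.rename Sum.inl (P pq.1)) * (MvPolynomial.rename Sum.inr (P pq.2))
    have hReval : ∀ u : Fin 4 ⊕ Fin 4 → ℚ, MvPolynomial.eval u R =
        PowerSeries.coeff δ (φ ((fun i => u (Sum.inl i)) + (fun i => u (Sum.inr i)))) -
        PowerSeries.coeff δ (φ (fun i => u (Sum.inl i)) * φ (fun i => u (Sum.inr i))) := by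
      intro u
      rw [map_sub]
      congr 1
      · show MvPolynomial.eval u (MvPolynomial.bind₁ _ (P δ)) = _
        rw [show (MvPolynomial.eval u : MvPolynomial (Fin 4 ⊕ Fin 4) ℚ →+* ℚ) =
          MvPolynomial.eval₂Hom (RingHom.id ℚ) u from rfl]
        rw [MvPolynomial.eval₂Hom_bind₁]
        have harg : (fun i => MvPolynomial.eval u
              (MvPolynomial.X (Sum.inl i) + MvPolynomial.X (Sum.inr i))) =
            ((fun i => u (Sum.inl i)) + (fun i => u (Sum.inr i)) : Fin 4 → ℚ) := by
          funext i; simp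
        rw [hP]
        exact congrArg (fun f => MvPolynomial.eval f (P δ)) harg
      · rw [map_sum, PowerSeries.coeff_mul]
        apply Finset.sum_congr rfl
        intro pq _
        rw [map_mul, MvPolynomial.eval_rename, MvPolynomial.eval_rename, hP, hP]
        rfl
    have hR0 : ∀ u ∈ T, MvPolynomial.eval u R = 0 := by
      rintro u ⟨h1, h2⟩
      rw [hReval, hmul _ h1 _ h2, sub_self]
    have hzero := dense_zero T hTadd hTspan R hR0 (Sum.elim v w)
    rw [hReval] at hzero
    have : PowerSeries.coeff δ (φ (v + w)) -
        PowerSeries.coeff δ (φ v * φ w) = 0 := hzero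
    linarith
  -- the logarithm
  let ψ : (Fin 4 → ℚ) → PowerSeries ℚ := fun v => PowerSeries.mk (expInvC (φ v))
  have hψ0 : ∀ v, PowerSeries.constantCoeff (ψ v) = 0 := fun v => by
    rw [← coeff_zero_eq_constantCoeff, coeff_mk]
    exact expInvC_zero (hconst v)
  have hψexp : ∀ v, expPS (ψ v) = φ v := fun v => expPS_expInv (hconst v)
  have hψadd : ∀ v w, ψ (v + w) = ψ v + ψ w := by
    intro v w
    apply expPS_injOn (hψ0 _) (by rw [map_add, hψ0, hψ0, add_zero])
    rw [expPS_add (hψ0 v) (hψ0 w), hψexp, hψexp, hψexp, hmul']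
  let Ψ : (Fin 4 → ℚ) →+ PowerSeries ℚ := AddMonoidHom.mk' ψ hψadd
  let Ψl : (Fin 4 → ℚ) →ₗ[ℚ] PowerSeries ℚ := Ψ.toRatLinearMap
  refine ⟨fun i => ψ (Pi.single i 1), fun i => hψ0 _, fun v => ?_⟩
  rw [← hψexp v]
  refine Eq.trans (congrArg expPS ?_) rfl
  have hv : v = ∑ i, v i • (Pi.single i 1 : Fin 4 → ℚ) := by
    have h1 : ∀ i : Fin 4, v i • (Pi.single i 1 : Fin 4 → ℚ) = Pi.single i (v i) := by
      intro i
      rw [← Pi.single_smul, smul_eq_mul, mul_one]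
    rw [Finset.sum_congr rfl fun i _ => h1 i, Finset.univ_sum_single]
  have hlin : Ψl (∑ i, v i • (Pi.single i 1 : Fin 4 → ℚ)) = ∑ i, v i • ψ (Pi.single i 1) := by
    rw [map_sum]
    exact Finset.sum_congr rfl fun i _ => by rw [map_smul]; rfl
  show ψ v = ∑ i, v i • ψ (Pi.single i 1)
  calc ψ v = Ψl v := rfl
    _ = Ψl (∑ i, v i • (Pi.single i 1 : Fin 4 → ℚ)) := by rw [← hv]
    _ = ∑ i, v i • ψ (Pi.single i 1) := hlin
end
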